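/- Suppose V : (0,∞) → ℝ is twice differentiable, V(S) > 0 for all S > 0, and V solves the perpetual American put variational inequality. If S₀ > 0 satisfies V(S₀) = max(E−S₀, 0) (i.e. S₀ lies in the stopping region), then S₀ ≤ E and q·S₀ ≤ r·E; in particular the optimal exercise boundary cannot exceed min{rE/q, E} when q > 0. -/

import Mathlib

open Topology Filter Set


/-- The Black–Scholes ordinary differential operator `(−LV)(S)`,
expressed via explicitly given first and second derivative functions. -/
noncomputable def negL (r q σ : ℝ) (V V' V'' : ℝ → ℝ) (S : ℝ) : ℝ :=
  -(σ ^ 2 / 2) * S ^ 2 * V'' S - (r - q) * S * V' S + r * V S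

/-- If `S₀` lies in the stopping region of a positive solution `V` of the perpetual
American put variational inequality, then `S₀ ≤ E` and `q·S₀ ≤ r·E`: the optimal exercise
boundary cannot exceed `min{rE/q, E}`. -/
theorem stopping_region_bound
    (r q σ E : ℝ) (hr : 0 < r) (hq : 0 ≤ q) (hσ : 0 < σ) (hE : 0 < E)
    (V V' V'' : ℝ → ℝ)
    (hV' : ∀ S : ℝ, 0 < S → HasDerivAt V (V' S) S)
    (hV'' : ∀ S : ℝ, 0 < S → HasDerivAt V' (V'' S) S)
    (hpos : ∀ S : ℝ, 0 < S → 0 < V S)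
    (hVI : ∀ S : ℝ, 0 < S →
      min (negL r q σ V V' V'' S) (V S - max (E - S) 0) = 0)
    (S₀ : ℝ) (hS₀ : 0 < S₀) (hstop : V S₀ = max (E - S₀) 0) :
    S₀ ≤ E ∧ q * S₀ ≤ r * E := by

  -- V dominates the payoff and negL ≥ 0 at every positive S
  have hge : ∀ S : ℝ, 0 < S → max (E - S) 0 ≤ V S := by
    intro S hS
    have h := hVI S hS
    have h2 := min_le_right (negL r q σ V V' V'' S) (V S - max (E - S) 0)
    rw [h] at h2
    linarith
  have hnegL : 0 ≤ negL r q σ V V' V'' S₀ := by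
    have h := hVI S₀ hS₀
    have h2 := min_le_left (negL r q σ V V' V'' S₀) (V S₀ - max (E - S₀) 0)
    rw [h] at h2
    exact h2
  -- S₀ < E
  have hVS₀ : 0 < V S₀ := hpos S₀ hS₀
  have hES : 0 < E - S₀ := by
    by_contra h
    push_neg at h
    rw [hstop, max_eq_right h] at hVS₀
    exact lt_irrefl 0 hVS₀
  have hmax : max (E - S₀) 0 = E - S₀ := max_eq_left hES.le
  -- the contact function g
  set g : ℝ → ℝ := fun S => E - S - V S with hg
  have hgle : ∀ S : ℝ, 0 < S → g S ≤ 0 := by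
    intro S hS
    have h1 := hge S hS
    have h2 : E - S ≤ max (E - S) 0 := le_max_left _ _
    simp only [hg]; linarith
  have hg0 : g S₀ = 0 := by simp only [hg]; rw [hstop, hmax]; ring
  have hgd : ∀ S : ℝ, 0 < S → HasDerivAt g (-1 - V' S) S := by
    intro S hS
    exact (((hasDerivAt_id S).const_sub E).sub (hV' S hS)).congr_deriv (by simp)
  -- local max of g at S₀
  have hlm : IsLocalMax g S₀ := by
    filter_upwards [IsOpen.mem_nhds isOpen_Ioi hS₀] with x hx
    rw [hg0]; exact hgle x hx
  have hV'S₀ : V' S₀ = -1 := by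
    have := hlm.hasDerivAt_eq_zero (hgd S₀ hS₀)
    linarith
  have hg'S₀ : -1 - V' S₀ = 0 := by rw [hV'S₀]; ring
  -- second derivative nonneg
  have hV''S₀ : 0 ≤ V'' S₀ := by
    by_contra hc
    push_neg at hc
    -- g' has derivative -V'' S₀ > 0 at S₀ and g'(S₀)=0, so g' > 0 just right of S₀
    set g' : ℝ → ℝ := fun S => -1 - V' S with hg'
    have hdg' : HasDerivAt g' (-V'' S₀) S₀ := by
      exact ((hasDerivAt_const S₀ (-1:ℝ)).sub (hV'' S₀ hS₀)).congr_deriv (by simp)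
    have hslope := hasDerivAt_iff_tendsto_slope.1 hdg'
    have hposslope : ∀ᶠ x in 𝓝[≠] S₀, 0 < slope g' S₀ x :=
      hslope.eventually (eventually_gt_nhds (by linarith))
    have hpos' : ∀ᶠ x in 𝓝[>] S₀, 0 < g' x := by
      have h1 : ∀ᶠ x in 𝓝[>] S₀, 0 < slope g' S₀ x :=
        hposslope.filter_mono (nhdsWithin_mono _ fun x hx => ne_of_gt hx)
      filter_upwards [h1, self_mem_nhdsWithin] with x hx hx'
      have hx0 : (0:ℝ) < x - S₀ := sub_pos.2 hx'
      have : slope g' S₀ x = (g' x - g' S₀) / (x - S₀) := by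
        rw [slope_def_field]
      rw [this] at hx
      have := (div_pos_iff.1 hx)
      rcases this with ⟨h2, _⟩ | ⟨_, h3⟩
      · have : g' S₀ = 0 := hg'S₀
        nlinarith [h2]
      · linarith
    obtain ⟨b, hb, hsub⟩ := mem_nhdsGT_iff_exists_Ioc_subset.1 hpos'
    -- g strictly increasing on [S₀, b], contradicting g ≤ 0 = g(S₀)
    have hbpos : 0 < b := lt_trans hS₀ hb
    have hcont : ContinuousOn g (Set.Icc S₀ b) := by
      intro x hx
      exact ((hgd x (lt_of_lt_of_le hS₀ hx.1)).continuousAt).continuousWithinAt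
    have hderiv : ∀ x ∈ interior (Set.Icc S₀ b), 0 < deriv g x := by
      intro x hx
      rw [interior_Icc] at hx
      have hx0 : 0 < x := lt_trans hS₀ hx.1
      rw [(hgd x hx0).deriv]
      exact hsub ⟨hx.1, hx.2.le⟩
    have hmono := strictMonoOn_of_deriv_pos (convex_Icc S₀ b) hcont hderiv
    have : g S₀ < g b := hmono (Set.left_mem_Icc.2 hb.le) (Set.right_mem_Icc.2 hb.le) hb
    have := hgle b hbpos
    linarith [hg0]
  -- conclude
  constructor
  · linarith
  · have : negL r q σ V V' V'' S₀ =
        -(σ ^ 2 / 2) * S₀ ^ 2 * V'' S₀ + (r - q) * S₀ + r * (E - S₀) := by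
      simp only [negL, hV'S₀, hstop, hmax]; ring
    rw [this] at hnegL
    nlinarith [sq_nonneg S₀, mul_pos (mul_pos (by positivity : (0:ℝ) < σ^2/2) (by positivity : (0:ℝ) < S₀^2)) hVS₀]
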